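/- Let f ∈ F_q[x] be squarefree, σ̃(a) = a^(q^s) the s-th power Frobenius on F_q[x]/(f) of order d, and p a prime with p^e exactly dividing d. Then g = gcd(σ̃^(d/p)(x) − x, f) is the product of the irreducible factors of f whose degree divides s·d/p, and f/g is the product of those irreducible factors of f whose degree is divisible by s·p^e. -/

import Mathlib

open Polynomial UniqueFactorizationMonoid

private lemma nat_aux (q : ℕ) (hq : 2 ≤ q) : ∀ n m : ℕ, q ^ m - 1 ∣ q ^ n - 1 → m ∣ n := by
  intro n
  induction n using Nat.strong_induction_on with
  | _ n ih =>
    intro m hdvd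
    rcases Nat.lt_or_ge n m with hlt | hge
    · rcases Nat.eq_zero_or_pos n with rfl | hn
      · exact dvd_zero m
      · exfalso
        have h2 : q ^ n < q ^ m := Nat.pow_lt_pow_right (by omega) hlt
        have h1 : 2 ≤ q ^ n := le_trans hq (Nat.le_self_pow hn.ne' q)
        have := Nat.le_of_dvd (by omega) hdvd
        omega
    · rcases Nat.eq_zero_or_pos m with rfl | hm
      · rw [pow_zero] at hdvd
        simp only [Nat.sub_self, zero_dvd_iff] at hdvd
        rcases Nat.eq_zero_or_pos n with rfl | hn
        · exact dvd_refl 0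
        · have : 2 ≤ q ^ n := le_trans hq (Nat.le_self_pow hn.ne' q)
          omega
      · have hqnm : q ^ (n - m) * q ^ m = q ^ n := by
          rw [← pow_add]; congr 1; omega
        have h3 : 1 ≤ q ^ (n - m) := Nat.one_le_pow _ _ (by omega)
        have h4 : 1 ≤ q ^ m := Nat.one_le_pow _ _ (by omega)
        have h6 : q ^ (n - m) ≤ q ^ n := Nat.pow_le_pow_right (by omega) (by omega)
        have hkey : q ^ m - 1 ∣ q ^ (n - m) - 1 := by
          have h5 : q ^ (n - m) * (q ^ m - 1) = q ^ n - q ^ (n - m) := by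
            rw [Nat.mul_sub, mul_one, hqnm]
          have h2 : q ^ (n - m) - 1 = (q ^ n - 1) - q ^ (n - m) * (q ^ m - 1) := by
            omega
          rw [h2]
          exact Nat.dvd_sub hdvd (dvd_mul_left _ _)
        have hrec : m ∣ n - m := ih (n - m) (by omega) m hkey
        have h7 : n = (n - m) + m := by omega
        rw [h7]
        exact Nat.dvd_add hrec (dvd_refl m)

private lemma nt_aux {t d p e : ℕ} (hp : p.Prime) (he : 1 ≤ e) (ht : 1 ≤ t) (hd : 1 ≤ d)
    (htd : t ∣ d) (hpe : p ^ e ∣ d) (hpe' : ¬ p ^ (e + 1) ∣ d) :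
    (¬ t ∣ d / p) ↔ p ^ e ∣ t := by
  have hpd : p ∣ d := dvd_trans (dvd_pow_self p (by omega : e ≠ 0)) hpe
  have hdp0 : d / p ≠ 0 := (Nat.div_pos (Nat.le_of_dvd hd hpd) hp.pos).ne'
  constructor
  · intro hnd
    by_contra hne
    apply hnd
    rw [← Nat.factorization_le_iff_dvd (by omega : t ≠ 0) hdp0, Nat.factorization_div hpd,
      hp.factorization]
    intro qq
    rw [Finsupp.tsub_apply]
    have hbase : t.factorization qq ≤ d.factorization qq :=
      (Nat.factorization_le_iff_dvd (by omega : t ≠ 0) (by omega : d ≠ 0)).mpr htd qq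
    by_cases hq : qq = p
    · subst hq
      have h1 : ¬ e ≤ t.factorization qq := fun hle =>
        hne ((hp.pow_dvd_iff_le_factorization (by omega : t ≠ 0)).mpr hle)
      have h2 : e ≤ d.factorization qq := (hp.pow_dvd_iff_le_factorization (by omega : d ≠ 0)).mp hpe
      rw [Finsupp.single_eq_same]
      omega
    · rw [Finsupp.single_eq_of_ne' (fun hh : p = qq => hq hh.symm)]
      omega
  · intro hpt htdp
    apply hpe'
    have h1 : p ^ e ∣ d / p := hpt.trans htdp
    calc p ^ (e + 1) = p ^ e * p := (pow_succ p e)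
      _ ∣ (d / p) * p := mul_dvd_mul_right h1 p
      _ = d := Nat.div_mul_cancel hpd

private lemma key_lemma {K : Type*} [Field K] [Fintype K] [DecidableEq K] (h : K[X])
    (hirr : Irreducible h) {n : ℕ} (hn : n ≠ 0) :
    h ∣ (X ^ (Fintype.card K) ^ n - X) ↔ h.natDegree ∣ n := by
  have hfact : Fact (Irreducible h) := ⟨hirr⟩
  set q := Fintype.card K with hq
  have hq2 : 2 ≤ q := Fintype.one_lt_card
  set m := h.natDegree with hm
  have hm1 : 0 < m := natDegree_pos_iff_degree_pos.mpr (degree_pos_of_irreducible hirr)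
  set L := AdjoinRoot h with hL
  let pb := AdjoinRoot.powerBasis (f := h) hirr.ne_zero
  have : Fintype L := Module.fintypeOfFintype pb.basis
  have cardL : Fintype.card L = q ^ m := by
    rw [Module.card_fintype pb.basis, Fintype.card_fin]
    rfl
  have hroot : h ∣ (X ^ q ^ n - X) ↔
      (AdjoinRoot.root h) ^ q ^ n = AdjoinRoot.root h := by
    rw [← AdjoinRoot.mk_eq_zero, map_sub, map_pow, AdjoinRoot.mk_X, sub_eq_zero]
  rw [hroot]
  constructor
  · intro hfix
    -- transfer to all of L via an algebra homomorphism argument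
    let c := ringChar K
    have : CharP K c := ringChar.charP K
    have hcprime : c.Prime := CharP.char_is_prime K c
    obtain ⟨k, hcard⟩ := FiniteField.card K c
    haveI : CharP L c := charP_of_injective_algebraMap (algebraMap K L).injective c
    haveI : ExpChar L c := ExpChar.prime hcprime
    have hck : c ^ ((k : ℕ) * n) = q ^ n := by
      rw [pow_mul, ← hcard.2]
    let φ : L →ₐ[K] L :=
      { toRingHom := iterateFrobenius L c ((k : ℕ) * n)
        commutes' := fun a => by
          simp only [RingHom.toMonoidHom_eq_coe, OneHom.toFun_eq_coe, MonoidHom.toOneHom_coe,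
            MonoidHom.coe_coe, iterateFrobenius_def]
          rw [← map_pow, hck, FiniteField.pow_card_pow] }
    have hφ : ∀ x : L, φ x = x ^ q ^ n := fun x => by
      show iterateFrobenius L c ((k : ℕ) * n) x = _
      rw [iterateFrobenius_def, hck]
    have hid : φ = AlgHom.id K L := AdjoinRoot.algHom_ext (by
      rw [hφ]; exact hfix)
    have allfix : ∀ x : L, x ^ q ^ n = x := fun x => by
      rw [← hφ, hid]; rfl
    obtain ⟨u, hu⟩ := IsCyclic.exists_generator (α := Lˣ)
    have hordu : orderOf u = q ^ m - 1 := by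
      rw [orderOf_eq_card_of_forall_mem_zpowers hu, Nat.card_eq_fintype_card,
        Fintype.card_units, cardL]
    have hqn1 : 1 ≤ q ^ n := Nat.one_le_pow _ _ (by omega)
    have hupow : (u : L) ^ (q ^ n - 1) = 1 := by
      have hne : (u : L) ≠ 0 := Units.ne_zero u
      have h1 : (u : L) ^ (q ^ n - 1) * u = 1 * (u : L) := by
        rw [← pow_succ, one_mul]
        have : q ^ n - 1 + 1 = q ^ n := by omega
        rw [this]
        exact allfix u
      exact mul_right_cancel₀ hne h1
    have hu1 : u ^ (q ^ n - 1) = 1 := Units.ext (by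
      push_cast
      exact hupow)
    have hdvd1 : q ^ m - 1 ∣ q ^ n - 1 := by
      rw [← hordu]
      exact orderOf_dvd_of_pow_eq_one hu1
    exact nat_aux q hq2 n m hdvd1
  · rintro ⟨j, rfl⟩
    rw [pow_mul, ← cardL]
    exact FiniteField.pow_card_pow j _

private lemma prod_aux {K : Type*} [Field K] [DecidableEq K] {g : K[X]} (hg : g.Monic)
    (hsq : Squarefree g) (S : Finset K[X])
    (hS : ∀ h : K[X], h ∈ S ↔ h.Monic ∧ Irreducible h ∧ h ∣ g) :
    g = ∏ h ∈ S, h := by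
  classical
  have hg0 : g ≠ 0 := hg.ne_zero
  have hSeq : S = (normalizedFactors g).toFinset := by
    ext h
    rw [hS, Multiset.mem_toFinset]
    constructor
    · rintro ⟨hmon, hirr, hdvd⟩
      obtain ⟨r, hrmem, hassoc⟩ := exists_mem_normalizedFactors_of_dvd hg0 hirr hdvd
      have hr0 : r ≠ 0 := (irreducible_of_normalized_factor r hrmem).ne_zero
      have hrmon : r.Monic := by
        have hnr := normalize_normalized_factor r hrmem
        rw [← hnr]
        exact monic_normalize hr0
      rwa [eq_of_monic_of_associated hmon hrmon hassoc]
    · intro hmem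
      have hirr := irreducible_of_normalized_factor h hmem
      have hmon : h.Monic := by
        have hnh := normalize_normalized_factor h hmem
        rw [← hnh]
        exact monic_normalize hirr.ne_zero
      exact ⟨hmon, hirr, dvd_of_mem_normalizedFactors hmem⟩
  have hnodup : (normalizedFactors g).Nodup :=
    (squarefree_iff_nodup_normalizedFactors hg0).mp hsq
  have hprodeq : ∏ h ∈ (normalizedFactors g).toFinset, h = (normalizedFactors g).prod := by
    rw [← Multiset.toFinset_eq hnodup, Finset.prod_mk]
    simp
  have hassoc : Associated (normalizedFactors g).prod g := prod_normalizedFactors hg0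
  have hprodmon : (∏ h ∈ S, h).Monic :=
    monic_prod_of_monic _ _ (fun h hh => ((hS h).mp hh).1)
  apply eq_of_monic_of_associated hg hprodmon
  rw [hSeq, hprodeq]
  exact hassoc.symm

theorem stmt12 (F : Type*) [Field F] [Fintype F] [DecidableEq F]
    (s d p e : ℕ) (hs : 1 ≤ s) (hd : 1 ≤ d) (hp : p.Prime)
    (hpe : p ^ e ∣ d) (hpe' : ¬ p ^ (e + 1) ∣ d) (hepos : 1 ≤ e)
    (f : F[X]) (hsq : Squarefree f) (hmon : f.Monic) (hdeg : 0 < f.natDegree)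
    (hdvd : ∀ h : F[X], Irreducible h → h ∣ f → s ∣ h.natDegree)
    (σ : (F[X] ⧸ Ideal.span {f}) ≃ₐ[F] (F[X] ⧸ Ideal.span {f}))
    (hσ : ∀ a, σ a = a ^ (Fintype.card F) ^ s)
    (hord : orderOf σ = d)
    (g : F[X])
    (hg : g = normalize (EuclideanDomain.gcd
      (X ^ (Fintype.card F) ^ (s * (d / p)) - X : F[X]) f)) :
    (∀ S : Finset F[X],
      (∀ h : F[X], h ∈ S ↔ h.Monic ∧ Irreducible h ∧ h ∣ f ∧ h.natDegree ∣ s * (d / p)) →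
      g = ∏ h ∈ S, h) ∧
    (∀ S : Finset F[X],
      (∀ h : F[X], h ∈ S ↔ h.Monic ∧ Irreducible h ∧ h ∣ f ∧ s * p ^ e ∣ h.natDegree) →
      f / g = ∏ h ∈ S, h) := by
  classical
  set q := Fintype.card F with hqdef
  have hpd : p ∣ d := dvd_trans (dvd_pow_self p (by omega : e ≠ 0)) hpe
  have hdp1 : 1 ≤ d / p := Nat.div_pos (Nat.le_of_dvd hd hpd) hp.pos
  set m := s * (d / p) with hmdef
  have hm0 : m ≠ 0 := Nat.mul_ne_zero (by omega) (by omega)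
  have hsd0 : s * d ≠ 0 := Nat.mul_ne_zero (by omega) (by omega)
  have hf0 : f ≠ 0 := hmon.ne_zero
  -- f divides X ^ q ^ (s * d) - X
  have hfd : f ∣ (X ^ q ^ (s * d) - X : F[X]) := by
    have hσd : σ ^ d = 1 := by rw [← hord]; exact pow_orderOf_eq_one σ
    have hpowk : ∀ (k : ℕ) (a : F[X] ⧸ Ideal.span {f}), (σ ^ k) a = a ^ (q ^ s) ^ k := by
      intro k
      induction k with
      | zero => intro a; simp
      | succ k ihk =>
        intro a
        rw [pow_succ, AlgEquiv.mul_apply, hσ, ihk, ← pow_mul, ← pow_succ']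
    have hX : ((Ideal.Quotient.mk (Ideal.span {f})) X) ^ q ^ (s * d)
        = Ideal.Quotient.mk (Ideal.span {f}) X := by
      have h1 := hpowk d (Ideal.Quotient.mk (Ideal.span {f}) X)
      rw [hσd] at h1
      simp only [AlgEquiv.one_apply] at h1
      rw [← pow_mul] at h1
      exact h1.symm
    have h2 : (Ideal.Quotient.mk (Ideal.span {f})) (X ^ q ^ (s * d) - X) = 0 := by
      rw [map_sub, map_pow, hX, sub_self]
    rwa [Ideal.Quotient.eq_zero_iff_mem, Ideal.mem_span_singleton] at h2
  have hgcd0 : EuclideanDomain.gcd (X ^ q ^ m - X : F[X]) f ≠ 0 := by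
    intro h0
    exact hf0 (EuclideanDomain.gcd_eq_zero_iff.mp h0).2
  have hgmon : g.Monic := hg ▸ monic_normalize hgcd0
  have hgdvf : g ∣ f := by
    rw [hg]
    exact (normalize_associated _).dvd.trans (EuclideanDomain.gcd_dvd_right _ _)
  have hgsq : Squarefree g := hsq.squarefree_of_dvd hgdvf
  have hgdvd_iff : ∀ h : F[X], Irreducible h → (h ∣ g ↔ h ∣ f ∧ h.natDegree ∣ m) := by
    intro h hirr
    rw [hg, Associated.dvd_iff_dvd_right (normalize_associated _)]
    constructor
    · intro hdg
      exact ⟨hdg.trans (EuclideanDomain.gcd_dvd_right _ _),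
        (key_lemma h hirr hm0).mp (hdg.trans (EuclideanDomain.gcd_dvd_left _ _))⟩
    · rintro ⟨h2, h3⟩
      exact EuclideanDomain.dvd_gcd ((key_lemma h hirr hm0).mpr h3) h2
  have hfg : g * (f / g) = f := EuclideanDomain.mul_div_cancel' hgmon.ne_zero hgdvf
  have hg'dvf : f / g ∣ f := ⟨g, by rw [mul_comm]; exact hfg.symm⟩
  have hg'mon : (f / g).Monic := hgmon.of_mul_monic_left (by rwa [hfg])
  have hg'sq : Squarefree (f / g) := hsq.squarefree_of_dvd hg'dvf
  have hg'dvd_iff : ∀ h : F[X], Irreducible h →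
      (h ∣ f / g ↔ h ∣ f ∧ s * p ^ e ∣ h.natDegree) := by
    intro h hirr
    have hdegpos : 0 < h.natDegree :=
      natDegree_pos_iff_degree_pos.mpr (degree_pos_of_irreducible hirr)
    constructor
    · intro hdg'
      have hhf : h ∣ f := hdg'.trans hg'dvf
      have hnotg : ¬ h ∣ g := by
        intro hdg
        have hh2 : h * h ∣ f := by rw [← hfg]; exact mul_dvd_mul hdg hdg'
        exact hirr.not_isUnit (hsq h hh2)
      have hnotm : ¬ h.natDegree ∣ m := fun hmm =>
        hnotg ((hgdvd_iff h hirr).mpr ⟨hhf, hmm⟩)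
      obtain ⟨t, ht⟩ := hdvd h hirr hhf
      have hdegsd : h.natDegree ∣ s * d :=
        (key_lemma h hirr hsd0).mp (hhf.trans hfd)
      have htd : t ∣ d := by
        rw [ht] at hdegsd
        exact (Nat.mul_dvd_mul_iff_left hs).mp hdegsd
      have ht1 : 1 ≤ t := by
        rcases Nat.eq_zero_or_pos t with rfl | h1
        · rw [ht, mul_zero] at hdegpos; omega
        · exact h1
      have hnt : ¬ t ∣ d / p := by
        intro htt
        exact hnotm (by rw [ht, hmdef]; exact mul_dvd_mul_left s htt)
      have hpet := (nt_aux hp hepos ht1 hd htd hpe hpe').mp hnt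
      exact ⟨hhf, by rw [ht]; exact mul_dvd_mul_left s hpet⟩
    · rintro ⟨hhf, hspe⟩
      have hnotm : ¬ h.natDegree ∣ m := by
        obtain ⟨t, ht⟩ := hdvd h hirr hhf
        intro hmm
        rw [ht] at hspe hmm
        have hpt : p ^ e ∣ t := (Nat.mul_dvd_mul_iff_left hs).mp hspe
        have htdp : t ∣ d / p := (Nat.mul_dvd_mul_iff_left hs).mp hmm
        have h1 : p ^ e ∣ d / p := hpt.trans htdp
        apply hpe'
        calc p ^ (e + 1) = p ^ e * p := pow_succ p e
          _ ∣ (d / p) * p := mul_dvd_mul_right h1 p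
          _ = d := Nat.div_mul_cancel hpd
      have hnotg : ¬ h ∣ g := fun hdg => hnotm (((hgdvd_iff h hirr).mp hdg).2)
      have hprime : Prime h := UniqueFactorizationMonoid.irreducible_iff_prime.mp hirr
      rcases hprime.2.2 g (f / g) (by rw [hfg]; exact hhf) with hcase | hcase
      · exact absurd hcase hnotg
      · exact hcase
  constructor
  · intro S hSmem
    refine prod_aux hgmon hgsq S (fun h => ?_)
    rw [hSmem h]
    constructor
    · rintro ⟨h1, h2, h3, h4⟩
      exact ⟨h1, h2, (hgdvd_iff h h2).mpr ⟨h3, h4⟩⟩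
    · rintro ⟨h1, h2, h3⟩
      obtain ⟨hh3, hh4⟩ := (hgdvd_iff h h2).mp h3
      exact ⟨h1, h2, hh3, hh4⟩
  · intro S hSmem
    refine prod_aux hg'mon hg'sq S (fun h => ?_)
    rw [hSmem h]
    constructor
    · rintro ⟨h1, h2, h3, h4⟩
      exact ⟨h1, h2, (hg'dvd_iff h h2).mpr ⟨h3, h4⟩⟩
    · rintro ⟨h1, h2, h3⟩
      obtain ⟨hh3, hh4⟩ := (hg'dvd_iff h h2).mp h3
      exact ⟨h1, h2, hh3, hh4⟩
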